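/- Progress for the direct-style λ*ε-calculus: if ∅^{dom(Σ)} | Σ ⊢ t : T^q ε (t is well typed in an empty variable context with observation filter dom(Σ)), then either t is a value, or for every store σ with ∅^{dom(Σ)} | Σ ⊢ σ there exist a term t' and a store σ' such that σ | t →ᵥ σ' | t'. -/

import Mathlib

/-- Atoms: term variables and store locations. -/
inductive Atom : Type
  | var : ℕ → Atom
  | loc : ℕ → Atom
deriving DecidableEq

/-- Qualifiers, effects and observations: finite sets of atoms. -/
abbrev Qual : Type := Finset Atom

/-- Types of the direct-style λ*ε-calculus. `fn x p T ε r U` is `(x : T^p) →^ε U^r`. -/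
inductive Ty : Type
  | base : ℕ → Ty
  | fn : ℕ → Qual → Ty → Qual → Qual → Ty → Ty
  | ref : ℕ → Ty

/-- Entries of typing contexts / store typings. -/
abbrev Binding := ℕ × Ty × Qual
abbrev Ctx := List Binding
abbrev StoreTy := List Binding

/-- Lookup in an association list (most recent binding first). -/
def lookupL {α : Type} : List (ℕ × α) → ℕ → Option α
  | [], _ => none
  | (y, e) :: Γ, x => if x = y then some e else lookupL Γ x

def ctxAtoms (Γ : Ctx) : Qual := (Γ.map (fun b => Atom.var b.1)).toFinset
def styAtoms (St : StoreTy) : Qual := (St.map (fun b => Atom.loc b.1)).toFinset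

/-- Qualifier substitution `q[p/x]`. -/
def qsubst (q : Qual) (p : Qual) (x : ℕ) : Qual :=
  if Atom.var x ∈ q then (q.erase (Atom.var x)) ∪ p else q

/-- Term variables occurring in a qualifier. -/
def qVars (q : Qual) : Finset ℕ :=
  q.biUnion (fun a => match a with | Atom.var x => {x} | Atom.loc _ => ∅)

/-- Free term variables of a type. -/
def Ty.fv : Ty → Finset ℕ
  | .base _ => ∅
  | .ref _ => ∅
  | .fn x p T ε r U => qVars p ∪ T.fv ∪ ((qVars ε ∪ qVars r ∪ U.fv).erase x)

/-- Qualifier substitution, extended homomorphically to types. -/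
def Ty.qsubstT : Ty → Qual → ℕ → Ty
  | .base b, _, _ => .base b
  | .ref b, _, _ => .ref b
  | .fn y p T ε r U, q, x =>
      if y = x then .fn y (qsubst p q x) (T.qsubstT q x) ε r U
      else .fn y (qsubst p q x) (T.qsubstT q x) (qsubst ε q x) (qsubst r q x) (U.qsubstT q x)

/-- One-step reachability between atoms, as determined by Γ and Σ. -/
def Reaches (Γ : Ctx) (St : StoreTy) (a b : Atom) : Prop :=
  match a with
  | .var x => ∃ e : Ty × Qual, lookupL Γ x = some e ∧ b ∈ e.2
  | .loc l => ∃ e : Ty × Qual, lookupL St l = some e ∧ b ∈ e.2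

/-- `Sat Γ St q s` : `s` is the saturation (transitive reachability closure) `q*` of `q`. -/
def Sat (Γ : Ctx) (St : StoreTy) (q s : Qual) : Prop :=
  ∀ a, a ∈ s ↔ ∃ b ∈ q, Relation.ReflTransGen (Reaches Γ St) b a

/-- Qualifier subtyping (rule q-sub). -/
def SubQual (Γ : Ctx) (St : StoreTy) (p q : Qual) : Prop :=
  p ⊆ q ∧ q ⊆ ctxAtoms Γ ∪ styAtoms St

/-- Subtyping on ordinary types (rules s-base, s-ref, s-fun). -/
inductive SubTy : Ctx → StoreTy → Ty → Ty → Prop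
  | base {Γ St b} : SubTy Γ St (.base b) (.base b)
  | ref {Γ St b} : SubTy Γ St (.ref b) (.ref b)
  | fn {Γ St x o p q r ε₁ ε₂} {S U T V : Ty} :
      SubTy Γ St U S → SubQual Γ St p o →
      SubTy ((x, U, p) :: Γ) St T V →
      SubQual ((x, U, p) :: Γ) St q r →
      SubQual ((x, U, p) :: Γ) St ε₁ ε₂ →
      SubTy Γ St (.fn x o S ε₁ q T) (.fn x p U ε₂ r V)

/-- Subtyping on qualified types with effects (rule sqe-sub). -/
def SubQTy (Γ : Ctx) (St : StoreTy) (S : Ty) (p ε₁ : Qual) (T : Ty) (q ε₂ : Qual) : Prop :=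
  SubTy Γ St S T ∧ SubQual Γ St p q ∧ SubQual Γ St ε₁ ε₂

/-- Terms of the direct-style λ*ε-calculus. `cst b c` is the constant `c` of base type `b`;
`ref t₁ t₂` is `ref_{t₁} t₂`. -/
inductive Tm : Type
  | cst : ℕ → ℕ → Tm
  | fvar : ℕ → Tm
  | loc : ℕ → Tm
  | abs : ℕ → Tm → Tm
  | app : Tm → Tm → Tm
  | ref : Tm → Tm → Tm
  | deref : Tm → Tm
  | assign : Tm → Tm → Tm
  | lett : ℕ → Tm → Tm → Tm

/-- The base type `Alloc` of allocation capabilities. -/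
def allocB : ℕ := 0
/-- The base type `Unit`. -/
def unitB : ℕ := 1

/-- Term typing `Γ^φ | Σ ⊢ t : T^q ε` of the direct-style λ*ε-calculus. -/
inductive HasTy : Qual → Ctx → StoreTy → Tm → Ty → Qual → Qual → Prop
  | cst {φ Γ St b c} : HasTy φ Γ St (.cst b c) (.base b) ∅ ∅
  | var {φ Γ St x T q} :
      lookupL Γ x = some (T, q) → Atom.var x ∈ φ →
      HasTy φ Γ St (.fvar x) T {Atom.var x} ∅
  | loc {φ Γ St l T q} :
      lookupL St l = some (T, q) → Atom.loc l ∈ φ →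
      HasTy φ Γ St (.loc l) T {Atom.loc l} ∅
  | abs {φ Γ St x t T U p q r ε} :
      HasTy (insert (Atom.var x) q) ((x, T, p) :: Γ) St t U r ε →
      q ⊆ φ →
      HasTy φ Γ St (.abs x t) (.fn x p T ε r U) q ∅
  | app {φ Γ St t₁ t₂ x T U p q r ps qs ε₁ ε₂ ε₃} :
      HasTy φ Γ St t₁ (.fn x (ps ∩ qs) T ε₃ r U) q ε₁ →
      HasTy φ Γ St t₂ T p ε₂ →
      Sat Γ St p ps → Sat Γ St q qs →
      x ∉ U.fv → ε₃ ⊆ insert (Atom.var x) q → r ⊆ insert (Atom.var x) φ →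
      HasTy φ Γ St (.app t₁ t₂) U (qsubst r p x) (qsubst (ε₁ ∪ ε₂ ∪ ε₃) p x)
  | lett {φ Γ St x t₁ t₂ S T p q ps φs ε₁ ε₂} :
      HasTy φ Γ St t₁ S p ε₁ →
      Sat Γ St p ps → Sat Γ St φ φs →
      HasTy (insert (Atom.var x) φ) ((x, S, ps ∩ φs) :: Γ) St t₂ T q ε₂ →
      x ∉ T.fv →
      HasTy φ Γ St (.lett x t₁ t₂) T (qsubst q p x) (qsubst (ε₁ ∪ ε₂) p x)
  | ref {φ Γ St t₁ t₂ b q ε₁ ε₂} :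
      HasTy φ Γ St t₁ (.base allocB) q ε₁ →
      HasTy φ Γ St t₂ (.base b) ∅ ε₂ →
      HasTy φ Γ St (.ref t₁ t₂) (.ref b) ∅ (ε₁ ∪ ε₂ ∪ q)
  | deref {φ Γ St t b q ε} :
      HasTy φ Γ St t (.ref b) q ε →
      HasTy φ Γ St (.deref t) (.base b) ∅ (ε ∪ q)
  | assign {φ Γ St t₁ t₂ b q ε₁ ε₂} :
      HasTy φ Γ St t₁ (.ref b) q ε₁ →
      HasTy φ Γ St t₂ (.base b) ∅ ε₂ →
      HasTy φ Γ St (.assign t₁ t₂) (.base unitB) ∅ (ε₁ ∪ ε₂ ∪ q)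
  | sub {φ Γ St t S T p q ε₁ ε₂} :
      HasTy φ Γ St t S p ε₁ → SubQTy Γ St S p ε₁ T q ε₂ →
      q ⊆ φ → ε₂ ⊆ φ →
      HasTy φ Γ St t T q ε₂

/-- Term substitution `t[v/x]` (binders with the same name shadow `x`). -/
def Tm.subst : Tm → Tm → ℕ → Tm
  | .cst b c, _, _ => .cst b c
  | .fvar y, v, x => if y = x then v else .fvar y
  | .loc l, _, _ => .loc l
  | .abs y t, v, x => if y = x then .abs y t else .abs y (t.subst v x)
  | .app a b, v, x => .app (a.subst v x) (b.subst v x)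
  | .ref a b, v, x => .ref (a.subst v x) (b.subst v x)
  | .deref a, v, x => .deref (a.subst v x)
  | .assign a b, v, x => .assign (a.subst v x) (b.subst v x)
  | .lett y a b, v, x => .lett y (a.subst v x) (if y = x then b else b.subst v x)

/-- Values of the direct-style λ*ε-calculus. -/
inductive IsValue : Tm → Prop
  | cst {b c} : IsValue (.cst b c)
  | abs {x t} : IsValue (.abs x t)
  | loc {l} : IsValue (.loc l)

/-- Runtime stores: sequences of bindings `let_s ℓ = ref_ω v`. -/
abbrev Store := List (ℕ × Tm)

/-- Functional update of a store at a location. -/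
def updateStore : Store → ℕ → Tm → Store
  | [], _, _ => []
  | (l, v) :: σ, l', v' => if l = l' then (l, v') :: σ else (l, v) :: updateStore σ l' v'

/-- Evaluation contexts `E ::= □ | E t | v E | ref_E t | ref_v E | !E | E := t | v := E
| let x = E in t`. -/
inductive ECtx : Type
  | hole : ECtx
  | appL : ECtx → Tm → ECtx
  | appR : Tm → ECtx → ECtx
  | refL : ECtx → Tm → ECtx
  | refR : Tm → ECtx → ECtx
  | deref : ECtx → ECtx
  | assignL : ECtx → Tm → ECtx
  | assignR : Tm → ECtx → ECtx
  | lett : ℕ → ECtx → Tm → ECtx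

def ECtx.plug : ECtx → Tm → Tm
  | .hole, t => t
  | .appL E t₂, t => .app (E.plug t) t₂
  | .appR v E, t => .app v (E.plug t)
  | .refL E t₂, t => .ref (E.plug t) t₂
  | .refR v E, t => .ref v (E.plug t)
  | .deref E, t => .deref (E.plug t)
  | .assignL E t₂, t => .assign (E.plug t) t₂
  | .assignR v E, t => .assign v (E.plug t)
  | .lett x E t₂, t => .lett x (E.plug t) t₂

/-- Well-formed evaluation contexts: positions to the left of the hole hold values. -/
inductive ECtxWf : ECtx → Prop
  | hole : ECtxWf .hole
  | appL {E t} : ECtxWf E → ECtxWf (.appL E t)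
  | appR {v E} : IsValue v → ECtxWf E → ECtxWf (.appR v E)
  | refL {E t} : ECtxWf E → ECtxWf (.refL E t)
  | refR {v E} : IsValue v → ECtxWf E → ECtxWf (.refR v E)
  | deref {E} : ECtxWf E → ECtxWf (.deref E)
  | assignL {E t} : ECtxWf E → ECtxWf (.assignL E t)
  | assignR {v E} : IsValue v → ECtxWf E → ECtxWf (.assignR v E)
  | lett {x E t} : ECtxWf E → ECtxWf (.lett x E t)

/-- Head reduction rules β, let, ref, deref, assign. -/
inductive HeadStep : Store → Tm → Store → Tm → Prop
  | beta {σ x t v} : IsValue v →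
      HeadStep σ (.app (.abs x t) v) σ (t.subst v x)
  | lett {σ x v t} : IsValue v →
      HeadStep σ (.lett x v t) σ (t.subst v x)
  | ref {σ c v l} : IsValue v → lookupL σ l = none →
      HeadStep σ (.ref (.cst allocB c) v) ((l, v) :: σ) (.loc l)
  | deref {σ l v} : lookupL σ l = some v →
      HeadStep σ (.deref (.loc l)) σ v
  | assign {σ l v v'} : IsValue v' → lookupL σ l = some v →
      HeadStep σ (.assign (.loc l) v') (updateStore σ l v') (.cst unitB 0)

/-- Standard call-by-value reduction `σ | t →ᵥ σ' | t'`. -/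
inductive Step : Store → Tm → Store → Tm → Prop
  | ctx {E σ σ' t t'} : ECtxWf E → HeadStep σ t σ' t' →
      Step σ (E.plug t) σ' (E.plug t')

/-- Well-formed stores `Γ^φ | Σ ⊢ σ`: the store has the same locations as `Σ` and each
stored value is well typed at the base type recorded in `Σ`. -/
inductive StoreOk : Qual → Ctx → StoreTy → Store → Prop
  | nil {φ Γ} : StoreOk φ Γ [] []
  | cons {φ Γ St σ v b l} :
      StoreOk φ Γ St σ →
      HasTy φ Γ St v (.base b) ∅ ∅ →
      lookupL St l = none →
      StoreOk φ Γ ((l, .ref b, (∅ : Qual)) :: St) ((l, v) :: σ)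

/-! ### Auxiliary lemmas for progress -/

lemma lookupL_none_of_not_mem {α : Type} (σ : List (ℕ × α)) (l : ℕ)
    (h : ∀ p ∈ σ, p.1 ≠ l) : lookupL σ l = none := by
  induction σ with
  | nil => rfl
  | cons a σ ih =>
    obtain ⟨y, e⟩ := a
    have hy : y ≠ l := h (y, e) (by simp)
    have : l ≠ y := fun hh => hy hh.symm
    simp only [lookupL, if_neg this]
    exact ih fun p hp => h p (List.mem_cons_of_mem _ hp)

lemma le_foldr_max (L : List ℕ) : ∀ x ∈ L, x ≤ L.foldr max 0 := by
  induction L with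
  | nil => simp
  | cons a L ih =>
    intro x hx
    simp at hx
    rcases hx with rfl | hx
    · exact le_max_left _ _
    · exact le_trans (ih x hx) (le_max_right _ _)

lemma exists_fresh (σ : Store) : ∃ l, lookupL σ l = none := by
  refine ⟨(σ.map Prod.fst).foldr max 0 + 1, lookupL_none_of_not_mem _ _ fun p hp => ?_⟩
  have := le_foldr_max (σ.map Prod.fst) p.1 (List.mem_map_of_mem (f := Prod.fst) hp)
  omega

lemma storeOk_lookup {φ Γ St σ} (h : StoreOk φ Γ St σ) :
    ∀ l T p, lookupL St l = some (T, p) → ∃ b v, T = Ty.ref b ∧ lookupL σ l = some v := by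
  induction h with
  | nil => intro l T p hl; cases hl
  | @cons St σ v b l' hσ hv hn ih =>
    intro l T p hl
    by_cases he : l = l'
    · subst he
      simp [lookupL] at hl
      exact ⟨b, v, hl.1.symm, by simp [lookupL]⟩
    · simp [lookupL, he] at hl ⊢
      obtain ⟨b', v', hb, hv'⟩ := ih l T p hl
      exact ⟨⟨b', hb⟩, v', hv'⟩

lemma ty_cst_inv : ∀ {φ Γ St t T q ε}, HasTy φ Γ St t T q ε →
    ∀ b c, t = Tm.cst b c → T = Ty.base b := by
  intro φ Γ St t T q ε h
  induction h with
  | cst => intro b c he; cases he; rfl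
  | sub h hs _ _ ih =>
    intro b c he
    have := ih b c he
    subst this
    cases hs.1
    rfl
  | var hl _ => intro b c he; cases he
  | loc hl _ => intro b c he; cases he
  | abs _ _ => intro b c he; cases he
  | app _ _ _ _ _ _ _ => intro b c he; cases he
  | lett _ _ _ _ _ => intro b c he; cases he
  | ref _ _ => intro b c he; cases he
  | deref _ => intro b c he; cases he
  | assign _ _ => intro b c he; cases he

lemma ty_abs_inv : ∀ {φ Γ St t T q ε}, HasTy φ Γ St t T q ε →
    ∀ x t0, t = Tm.abs x t0 → ∃ x' p T' ε' r U, T = Ty.fn x' p T' ε' r U := by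
  intro φ Γ St t T q ε h
  induction h with
  | abs _ _ => intro x t0 he; exact ⟨_, _, _, _, _, _, rfl⟩
  | sub h hs _ _ ih =>
    intro x t0 he
    obtain ⟨x', p, T', ε', r, U, rfl⟩ := ih x t0 he
    cases hs.1
    exact ⟨_, _, _, _, _, _, rfl⟩
  | cst => intro x t0 he; cases he
  | var hl _ => intro x t0 he; cases he
  | loc hl _ => intro x t0 he; cases he
  | app _ _ _ _ _ _ _ => intro x t0 he; cases he
  | lett _ _ _ _ _ => intro x t0 he; cases he
  | ref _ _ => intro x t0 he; cases he
  | deref _ => intro x t0 he; cases he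
  | assign _ _ => intro x t0 he; cases he

lemma ty_loc_inv : ∀ {φ Γ St t T q ε}, HasTy φ Γ St t T q ε →
    ∀ l, t = Tm.loc l → ∀ {φ' Γ' σ}, StoreOk φ' Γ' St σ →
    ∃ b v, T = Ty.ref b ∧ lookupL σ l = some v := by
  intro φ Γ St t T q ε h
  induction h with
  | loc hl _ =>
    intro l he φ' Γ' σ hσ
    cases he
    exact storeOk_lookup hσ _ _ _ hl
  | sub h hs _ _ ih =>
    intro l he φ' Γ' σ hσ
    obtain ⟨b, v, rfl, hv⟩ := ih l he hσ
    cases hs.1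
    exact ⟨b, v, rfl, hv⟩
  | cst => intro l he; cases he
  | var hl _ => intro l he; cases he
  | abs _ _ => intro l he; cases he
  | app _ _ _ _ _ _ _ => intro l he; cases he
  | lett _ _ _ _ _ => intro l he; cases he
  | ref _ _ => intro l he; cases he
  | deref _ => intro l he; cases he
  | assign _ _ => intro l he; cases he

lemma canFn {φ Γ St v x p T ε' r U q ε φ' Γ' σ}
    (h : HasTy φ Γ St v (Ty.fn x p T ε' r U) q ε) (hv : IsValue v)
    (hσ : StoreOk φ' Γ' St σ) : ∃ y t0, v = Tm.abs y t0 := by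
  cases hv with
  | cst => cases ty_cst_inv h _ _ rfl
  | abs => exact ⟨_, _, rfl⟩
  | loc => obtain ⟨b, w, hb, -⟩ := ty_loc_inv h _ rfl hσ; cases hb

lemma canAlloc {φ Γ St v b q ε φ' Γ' σ}
    (h : HasTy φ Γ St v (Ty.base b) q ε) (hv : IsValue v)
    (hσ : StoreOk φ' Γ' St σ) : ∃ c, v = Tm.cst b c := by
  cases hv with
  | cst =>
    have := ty_cst_inv h _ _ rfl
    cases this
    exact ⟨_, rfl⟩
  | abs => obtain ⟨x', p, T', ε', r, U, hb⟩ := ty_abs_inv h _ _ rfl; cases hb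
  | loc => obtain ⟨b', w, hb, -⟩ := ty_loc_inv h _ rfl hσ; cases hb

lemma canRef {φ Γ St v b q ε φ' Γ' σ}
    (h : HasTy φ Γ St v (Ty.ref b) q ε) (hv : IsValue v)
    (hσ : StoreOk φ' Γ' St σ) : ∃ l w, v = Tm.loc l ∧ lookupL σ l = some w := by
  cases hv with
  | cst => cases ty_cst_inv h _ _ rfl
  | abs => obtain ⟨x', p, T', ε', r, U, hb⟩ := ty_abs_inv h _ _ rfl; cases hb
  | loc =>
    obtain ⟨b', w, hb, hw⟩ := ty_loc_inv h _ rfl hσ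
    exact ⟨_, w, rfl, hw⟩

lemma progress_aux : ∀ {φ Γ St t T q ε}, HasTy φ Γ St t T q ε → Γ = [] →
    IsValue t ∨ ∀ σ, StoreOk φ Γ St σ → ∃ σ' t', Step σ t σ' t' := by
  intro φ Γ St t T q ε h
  induction h with
  | cst => intro _; left; exact .cst
  | var hl _ => intro hΓ; subst hΓ; simp [lookupL] at hl
  | loc _ _ => intro _; left; exact .loc
  | abs _ _ _ => intro _; left; exact .abs
  | @app φ Γ St t₁ t₂ x T U p q r ps qs ε₁ ε₂ ε₃ h1 h2 _ _ _ _ _ ih1 ih2 =>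
    intro hΓ; right; intro σ hσ
    rcases ih1 hΓ with v1 | s1
    · obtain ⟨y, t0, rfl⟩ := canFn h1 v1 hσ
      rcases ih2 hΓ with v2 | s2
      · exact ⟨σ, _, Step.ctx ECtxWf.hole (HeadStep.beta v2)⟩
      · obtain ⟨σ', t', st⟩ := s2 σ hσ
        cases st with
        | ctx wf hd => exact ⟨_, _, Step.ctx (ECtxWf.appR v1 wf) hd⟩
    · obtain ⟨σ', t', st⟩ := s1 σ hσ
      cases st with
      | ctx wf hd => exact ⟨_, _, Step.ctx (ECtxWf.appL wf) hd⟩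
  | @lett φ Γ St x t₁ t₂ S T p q ps φs ε₁ ε₂ h1 _ _ h2 _ ih1 ih2 =>
    intro hΓ; right; intro σ hσ
    rcases ih1 hΓ with v1 | s1
    · exact ⟨σ, _, Step.ctx ECtxWf.hole (HeadStep.lett v1)⟩
    · obtain ⟨σ', t', st⟩ := s1 σ hσ
      cases st with
      | ctx wf hd => exact ⟨_, _, Step.ctx (ECtxWf.lett wf) hd⟩
  | @ref φ Γ St t₁ t₂ b q ε₁ ε₂ h1 h2 ih1 ih2 =>
    intro hΓ; right; intro σ hσ
    rcases ih1 hΓ with v1 | s1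
    · obtain ⟨c, rfl⟩ := canAlloc h1 v1 hσ
      rcases ih2 hΓ with v2 | s2
      · obtain ⟨l, hl⟩ := exists_fresh σ
        exact ⟨_, _, Step.ctx ECtxWf.hole (HeadStep.ref v2 hl)⟩
      · obtain ⟨σ', t', st⟩ := s2 σ hσ
        cases st with
        | ctx wf hd => exact ⟨_, _, Step.ctx (ECtxWf.refR v1 wf) hd⟩
    · obtain ⟨σ', t', st⟩ := s1 σ hσ
      cases st with
      | ctx wf hd => exact ⟨_, _, Step.ctx (ECtxWf.refL wf) hd⟩
  | @deref φ Γ St t b q ε h1 ih =>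
    intro hΓ; right; intro σ hσ
    rcases ih hΓ with v1 | s1
    · obtain ⟨l, w, rfl, hw⟩ := canRef h1 v1 hσ
      exact ⟨σ, _, Step.ctx ECtxWf.hole (HeadStep.deref hw)⟩
    · obtain ⟨σ', t', st⟩ := s1 σ hσ
      cases st with
      | ctx wf hd => exact ⟨_, _, Step.ctx (ECtxWf.deref wf) hd⟩
  | @assign φ Γ St t₁ t₂ b q ε₁ ε₂ h1 h2 ih1 ih2 =>
    intro hΓ; right; intro σ hσ
    rcases ih1 hΓ with v1 | s1
    · obtain ⟨l, w, rfl, hw⟩ := canRef h1 v1 hσ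
      rcases ih2 hΓ with v2 | s2
      · exact ⟨_, _, Step.ctx ECtxWf.hole (HeadStep.assign v2 hw)⟩
      · obtain ⟨σ', t', st⟩ := s2 σ hσ
        cases st with
        | ctx wf hd => exact ⟨_, _, Step.ctx (ECtxWf.assignR v1 wf) hd⟩
    · obtain ⟨σ', t', st⟩ := s1 σ hσ
      cases st with
      | ctx wf hd => exact ⟨_, _, Step.ctx (ECtxWf.assignL wf) hd⟩
  | sub _ _ _ _ ih => exact ih

/-- **Progress** for the direct-style λ*ε-calculus: if `∅^{dom(Σ)} | Σ ⊢ t : T^q ε`, then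
either `t` is a value, or for every store `σ` with `∅^{dom(Σ)} | Σ ⊢ σ` there exist `t'`
and `σ'` with `σ | t →ᵥ σ' | t'`. -/
theorem progress
    (St : StoreTy) (t : Tm) (T : Ty) (q ε : Qual)
    (h : HasTy (styAtoms St) [] St t T q ε) :
    IsValue t ∨
      ∀ σ, StoreOk (styAtoms St) [] St σ → ∃ σ' t', Step σ t σ' t' := by
  exact progress_aux h rfl
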